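/- For all N ≥ 2, all k ∈ {1,…,N−1}, all p ∈ (1/2,1) and all ζ ≤ ζ' in Ω_{N,k}, one has (f^{(0)}_{N,k}(ζ') − f^{(0)}_{N,k}(ζ))·λ^{(N−k)/2} ≤ N·k·λ^{D_N(ζ')}, where D_N(ζ) := max(|L_N(ζ) − (N−k)|, |R_N(ζ) − (N−k)|), with L_N(ζ) = max{x : ζ(x) = −x} and R_N(ζ) = min{x : ζ(x) = x − 2(N−k)}. -/

import Mathlib

open Filter
open scoped Classical BigOperators Topology

namespace Wasep

/-- Particle configurations on a segment of length `N`
(site `x` of the paper, `x ∈ {1,…,N}`, is index `x-1 : Fin N`). -/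
abbrev Conf (N : ℕ) := Fin N → Bool

/-- Number of particles of a configuration. -/
def numParticles {N : ℕ} (ξ : Conf N) : ℕ :=
  (Finset.univ.filter fun x => ξ x = true).card

/-- The left site of the bond `y` (the paper's site `y`, for `y ∈ {1,…,N-1}`). -/
def siteA {N : ℕ} (y : Fin (N - 1)) : Fin N := ⟨y.1, by have := y.isLt; omega⟩

/-- The right site of the bond `y` (the paper's site `y+1`, for `y ∈ {1,…,N-1}`). -/
def siteB {N : ℕ} (y : Fin (N - 1)) : Fin N := ⟨y.1 + 1, by have := y.isLt; omega⟩

/-- Jump rate of the bond `y` in configuration `ξ`: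
`q·1_{ξ(y)<ξ(y+1)} + p·1_{ξ(y)>ξ(y+1)}` with `q = 1-p`. -/
noncomputable def rate {N : ℕ} (p : ℝ) (ξ : Conf N) (y : Fin (N - 1)) : ℝ :=
  (if ξ (siteA y) = false ∧ ξ (siteB y) = true then 1 - p else 0) +
    (if ξ (siteA y) = true ∧ ξ (siteB y) = false then p else 0)

/-- The configuration `ξ^y`, with the contents of sites `y` and `y+1` swapped. -/
def swapBond {N : ℕ} (ξ : Conf N) (y : Fin (N - 1)) : Conf N :=
  ξ ∘ Equiv.swap (siteA y) (siteB y)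

/-- The ASEP generator acting on functions:
`(L f)(ξ) = Σ_{y=1}^{N-1} (q·1_{ξ(y)<ξ(y+1)} + p·1_{ξ(y)>ξ(y+1)})(f(ξ^y) − f(ξ))`. -/
noncomputable def gen (N : ℕ) (p : ℝ) (f : Conf N → ℝ) (ξ : Conf N) : ℝ :=
  ∑ y : Fin (N - 1), rate p ξ y * (f (swapBond ξ y) - f ξ)

/-- The ASEP generator, as a matrix:  `(L f)(ξ) = Σ_{ξ'} genM(ξ,ξ') f(ξ')`. -/
noncomputable def genM (N : ℕ) (p : ℝ) : Matrix (Conf N) (Conf N) ℝ := fun ξ ξ' =>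
  ∑ y : Fin (N - 1),
    rate p ξ y * ((if ξ' = swapBond ξ y then (1 : ℝ) else 0) - (if ξ' = ξ then (1 : ℝ) else 0))

/-- The semigroup `P_t = exp (t L)`; `Pt N p t ξ ξ'` is the transition
probability from `ξ` to `ξ'` in time `t`. -/
noncomputable def Pt (N : ℕ) (p t : ℝ) (ξ ξ' : Conf N) : ℝ :=
  (NormedSpace.exp (t • LinearMap.toContinuousLinearMap (Matrix.toLin' (genM N p))))
    (fun η => if η = ξ' then (1 : ℝ) else 0) ξ

/-- `λ = p / q`. -/
noncomputable def lam (p : ℝ) : ℝ := p / (1 - p)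

/-- The bias `b = p - q`. -/
def bias (p : ℝ) : ℝ := p - (1 - p)

/-- The increasing list of (1-based) particle positions `ξ_1 < ξ_2 < … < ξ_k`. -/
def particlePos {N : ℕ} (ξ : Conf N) : List ℕ :=
  ((Finset.univ.filter fun x => ξ x = true).sort (· ≤ ·)).map fun x => (x : ℕ) + 1

/-- `A(ξ) = Σ_{i=1}^k (N − k + i − ξ_i)`. -/
def Astat (N k : ℕ) {M : ℕ} (ξ : Conf M) : ℤ :=
  ∑ i ∈ Finset.range k, ((N : ℤ) - k + (i + 1) - ((particlePos ξ).getD i 0 : ℤ))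

/-- The partition function `Z_{N,k} = Σ_{ξ ∈ Ω⁰_{N,k}} λ^{−A(ξ)}`. -/
noncomputable def Zpart (N k : ℕ) (p : ℝ) : ℝ :=
  ∑ ξ ∈ Finset.univ.filter (fun ξ : Conf N => numParticles ξ = k), lam p ^ (-Astat N k ξ)

/-- The invariant measure `π_{N,k}(ξ) = λ^{−A(ξ)}/Z_{N,k}`,
extended by `0` outside of the `k`-particle sector. -/
noncomputable def statMeas (N k : ℕ) (p : ℝ) (ξ : Conf N) : ℝ :=
  if numParticles ξ = k then lam p ^ (-Astat N k ξ) / Zpart N k p else 0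

/-- Total variation distance `‖μ − ν‖_TV = sup_A (μ(A) − ν(A))` on a finite space. -/
noncomputable def tvDist {S : Type*} [Fintype S] (μ ν : S → ℝ) : ℝ :=
  ⨆ A : Finset S, (∑ x ∈ A, μ x - ∑ x ∈ A, ν x)

/-- `d^{N,k}(t) = max_{ξ ∈ Ω⁰_{N,k}} ‖P_t(ξ,·) − π_{N,k}‖_TV`. -/
noncomputable def distEq (N k : ℕ) (p t : ℝ) : ℝ :=
  ⨆ ξ : {ξ : Conf N // numParticles ξ = k},
    tvDist (fun ξ' => Pt N p t ξ.1 ξ') (statMeas N k p)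

/-- `T^{N,k}_mix(ε) = inf {t ≥ 0 : d^{N,k}(t) ≤ ε}`. -/
noncomputable def Tmix (N k : ℕ) (p ε : ℝ) : ℝ :=
  sInf {t : ℝ | 0 ≤ t ∧ distEq N k p t ≤ ε}

/-- The height function `h(ξ)(x) = Σ_{y=1}^x (2ξ(y) − 1)`, for `x ∈ {0,…,N}`. -/
def height {N : ℕ} (ξ : Conf N) (x : ℕ) : ℤ :=
  ∑ y ∈ Finset.univ.filter (fun y : Fin N => (y : ℕ) < x), (if ξ y then (1 : ℤ) else -1)

/-- Pointwise order on height functions. -/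
def heightLE {N : ℕ} (ξ ξ' : Conf N) : Prop := ∀ x ≤ N, height ξ x ≤ height ξ' x

/-- `ϱ = (√p − √q)²`. -/
noncomputable def rho (p : ℝ) : ℝ := (Real.sqrt p - Real.sqrt (1 - p)) ^ 2

/-- The spectral gap `gap_N = (√p − √q)² + 4√(pq)·sin²(π/(2N))`. -/
noncomputable def gapN (N : ℕ) (p : ℝ) : ℝ :=
  rho p + 4 * Real.sqrt (p * (1 - p)) * Real.sin (Real.pi / (2 * N)) ^ 2

/-- `a` solves the boundary value problem `√(pq)·Δa(x) = ϱ·a(x)` on `{1,…,N−1}`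
with `a(0) = 1` and `a(N) = λ^{(2k−N)/2}`, defining `a_{N,k}`. -/
def IsBVP (N k : ℕ) (p : ℝ) (a : ℕ → ℝ) : Prop :=
  a 0 = 1 ∧ a N = lam p ^ ((2 * (k : ℝ) - N) / 2) ∧
    ∀ x : ℕ, 1 ≤ x → x ≤ N - 1 →
      Real.sqrt (p * (1 - p)) * (a (x + 1) + a (x - 1) - 2 * a x) = rho p * a x

/-- `f^{(j)}_{N,k}(ζ) = Σ_{x=1}^{N-1} sin(jπx/N)·(λ^{ζ(x)/2} − a_{N,k}(x))/(λ−1)`,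
viewed as a function of the particle configuration via the height function. -/
noncomputable def eigenF (N : ℕ) (p : ℝ) (a : ℕ → ℝ) (j : ℕ) (ξ : Conf N) : ℝ :=
  ∑ x ∈ Finset.Icc 1 (N - 1),
    Real.sin ((j : ℝ) * Real.pi * x / N) *
      ((lam p ^ ((height ξ x : ℝ) / 2) - a x) / (lam p - 1))

/-- `f^{(0)}_{N,k}(ζ) = Σ_{x=1}^{N-1} (λ^{ζ(x)/2} − a_{N,k}(x))/(λ−1)`. -/
noncomputable def fZero (N : ℕ) (p : ℝ) (a : ℕ → ℝ) (ξ : Conf N) : ℝ :=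
  ∑ x ∈ Finset.Icc 1 (N - 1), (lam p ^ ((height ξ x : ℝ) / 2) - a x) / (lam p - 1)

/-- The maximal configuration `ξ^max` (particles on sites `1,…,k`);
its height function is `∧`. -/
def confMax (N k : ℕ) : Conf N := fun x => decide ((x : ℕ) < k)

/-- The minimal configuration `ξ^min` (particles on sites `N−k+1,…,N`);
its height function is `∨`. -/
def confMin (N k : ℕ) : Conf N := fun x => decide (N - k ≤ (x : ℕ))

/-- `π_{N,k}(ξ(x) = 1)` for the (0-based) site `x : Fin N`. -/
noncomputable def occProb (N k : ℕ) (p : ℝ) (x : Fin N) : ℝ :=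
  ∑ ξ ∈ Finset.univ.filter (fun ξ : Conf N => ξ x = true), statMeas N k p ξ

/-- `ℓ_N(ξ) = min {x ∈ {1,…,N} : ξ(x) = 1}`, the position of the leftmost particle. -/
noncomputable def leftPos {N : ℕ} (ξ : Conf N) : ℕ :=
  sInf {x | ∃ y : Fin N, ξ y = true ∧ x = (y : ℕ) + 1}

/-- `r_N(ξ) = max {x ∈ {1,…,N} : ξ(x) = 0}`, the position of the rightmost empty site. -/
noncomputable def rightEmpty {N : ℕ} (ξ : Conf N) : ℕ :=
  sSup {x | ∃ y : Fin N, ξ y = false ∧ x = (y : ℕ) + 1}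

/-- `Q₁(ξ)`: maximal length of a run of consecutive empty sites. -/
noncomputable def runEmpty {N : ℕ} (ξ : Conf N) : ℕ :=
  sSup {n | 1 ≤ n ∧ ∃ i, i + n ≤ N ∧
    ∀ y : Fin N, i ≤ (y : ℕ) → (y : ℕ) < i + n → ξ y = false}

/-- `Q₂(ξ)`: maximal length of a run of consecutive occupied sites. -/
noncomputable def runFull {N : ℕ} (ξ : Conf N) : ℕ :=
  sSup {n | 1 ≤ n ∧ ∃ i, i + n ≤ N ∧
    ∀ y : Fin N, i ≤ (y : ℕ) → (y : ℕ) < i + n → ξ y = true}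

/-- `Q(ξ) = max(Q₁(ξ), Q₂(ξ))`. -/
noncomputable def Qmax {N : ℕ} (ξ : Conf N) : ℕ := max (runEmpty ξ) (runFull ξ)

/-- `L_N(ζ) = max{x : ζ(x) = −x}` for a height function `ζ`. -/
noncomputable def LNh {N : ℕ} (ξ : Conf N) : ℕ :=
  sSup {x | x ≤ N ∧ height ξ x = -(x : ℤ)}

/-- `R_N(ζ) = min{x : ζ(x) = x − 2(N−k)}` for a height function `ζ`. -/
noncomputable def RNh (k : ℕ) {N : ℕ} (ξ : Conf N) : ℕ :=
  sInf {x | x ≤ N ∧ height ξ x = (x : ℤ) - 2 * ((N : ℤ) - k)}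

/-- `D_N(ζ) = max(|L_N(ζ) − (N−k)|, |R_N(ζ) − (N−k)|)`. -/
noncomputable def DNh (k : ℕ) {N : ℕ} (ξ : Conf N) : ℤ :=
  max |(LNh ξ : ℤ) - ((N : ℤ) - k)| |(RNh k ξ : ℤ) - ((N : ℤ) - k)|

/-- `H_ζ(x) = λ^{(N−k)/2}·(λ^{ζ(x)/2} − a_{N,k}(x))/(λ−1)`. -/
noncomputable def Hfun (N k : ℕ) (p : ℝ) (a : ℕ → ℝ) (ξ : Conf N) (x : ℕ) : ℝ :=
  lam p ^ (((N : ℝ) - k) / 2) * ((lam p ^ ((height ξ x : ℝ) / 2) - a x) / (lam p - 1))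

/-- Variance of `f` under the (probability vector) `μ`. -/
noncomputable def varOf {S : Type*} [Fintype S] (μ f : S → ℝ) : ℝ :=
  (∑ x, μ x * f x ^ 2) - (∑ x, μ x * f x) ^ 2

/-- Total variation distance between the pushforwards of `μ` and `ν` by `g`. -/
noncomputable def tvPush {S : Type*} [Fintype S] (μ ν : S → ℝ) (g : S → ℕ) : ℝ :=
  ⨆ A : Set ℕ,
    ((∑ x ∈ Finset.univ.filter (fun x => g x ∈ A), μ x) -
      ∑ x ∈ Finset.univ.filter (fun x => g x ∈ A), ν x)

/-- The scaling limit `ℓ_α(t)` of the (rescaled) position of the leftmost particle. -/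
noncomputable def ellAlpha (α t : ℝ) : ℝ :=
  if t ≤ α then 0
  else if (Real.sqrt α + Real.sqrt (1 - α)) ^ 2 ≤ t then 1 - α
  else (Real.sqrt t - Real.sqrt α) ^ 2

/-- The scaling limit `r_α(t)` of the (rescaled) position of the rightmost empty site. -/
noncomputable def rAlpha (α t : ℝ) : ℝ :=
  if t ≤ 1 - α then 1
  else if (Real.sqrt α + Real.sqrt (1 - α)) ^ 2 ≤ t then 1 - α
  else 1 - (Real.sqrt t - Real.sqrt (1 - α)) ^ 2

end Wasep

namespace Wasep

lemma height_zero {N : ℕ} (ξ : Conf N) : height ξ 0 = 0 := by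
  simp [height]

lemma height_succ {N : ℕ} (ξ : Conf N) (x : ℕ) (hx : x < N) :
    height ξ (x + 1) = height ξ x + (if ξ ⟨x, hx⟩ then 1 else -1) := by
  unfold height
  rw [show (Finset.univ.filter fun y : Fin N => (y : ℕ) < x + 1) =
      insert ⟨x, hx⟩ (Finset.univ.filter fun y : Fin N => (y : ℕ) < x) by
    ext y; simp [Fin.ext_iff]; omega]
  rw [Finset.sum_insert (by simp)]
  ring

lemma height_lip {N : ℕ} (ξ : Conf N) (x y : ℕ) (hxy : x ≤ y) :
    y ≤ N → |height ξ y - height ξ x| ≤ (y : ℤ) - x := by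
  induction y, hxy using Nat.le_induction with
  | base => intro _; simp
  | succ n hn ih =>
    intro hN
    have h1 := ih (by omega)
    rw [height_succ ξ n (by omega)]
    rw [abs_le] at h1 ⊢
    push_cast
    split_ifs <;> constructor <;> omega

lemma height_top {N k : ℕ} (ξ : Conf N) (hξ : numParticles ξ = k) :
    height ξ N = 2 * (k : ℤ) - N := by
  unfold height
  rw [show (Finset.univ.filter fun y : Fin N => (y : ℕ) < N) = Finset.univ from
    Finset.filter_true_of_mem fun y _ => y.isLt]
  have h1 : ∀ y : Fin N, (if ξ y then (1 : ℤ) else -1)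
      = 2 * (if ξ y = true then (1 : ℤ) else 0) - 1 := by
    intro y; by_cases h : ξ y <;> simp [h]
  rw [Finset.sum_congr rfl fun y _ => h1 y, Finset.sum_sub_distrib, ← Finset.mul_sum,
    Finset.sum_boole, Finset.sum_const]
  have h2 : (Finset.filter (fun x => ξ x = true) Finset.univ).card = k := hξ
  rw [h2, Finset.card_univ, Fintype.card_fin]
  simp

lemma height_sub_even {N : ℕ} (ξ ξ' : Conf N) (x : ℕ) :
    Even (height ξ' x - height ξ x) := by
  unfold height
  rw [← Finset.sum_sub_distrib]
  apply Finset.even_sum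
  intro y _
  by_cases h1 : ξ' y <;> by_cases h2 : ξ y <;> simp [h1, h2]

lemma pow_sub_one_le (c : ℝ) (hc : 1 ≤ c) (n : ℕ) :
    c ^ n - 1 ≤ (n : ℝ) * c ^ n * (c - 1) := by
  induction n with
  | zero => simp
  | succ n ih =>
    have h1 : (1 : ℝ) ≤ c ^ n := one_le_pow₀ hc
    have h0 : 0 ≤ c - 1 := by linarith
    have h2 : (0 : ℝ) ≤ (n : ℝ) := Nat.cast_nonneg n
    have h3 := mul_le_mul_of_nonneg_left ih (by linarith : (0:ℝ) ≤ c)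
    have h4 : (0:ℝ) ≤ (c - 1) * (c ^ n * c - 1) :=
      mul_nonneg h0 (by nlinarith)
    rw [pow_succ]
    push_cast
    nlinarith [h3, h4]

lemma term_bound (c : ℝ) (hc : 1 < c) (k : ℕ) (v w nk D : ℤ)
    (hvw : v ≤ w) (hev : Even (w - v)) (h2k : w - v ≤ 2 * k) (hwD : w + nk ≤ 2 * D) :
    (c ^ ((w : ℝ) / 2) - c ^ ((v : ℝ) / 2)) / (c - 1) * c ^ ((nk : ℝ) / 2)
      ≤ (k : ℝ) * c ^ ((D : ℝ)) := by
  obtain ⟨m, hm⟩ := hev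
  have hm0 : 0 ≤ m := by omega
  lift m to ℕ using hm0 with n
  have hc0 : (0 : ℝ) < c := by linarith
  have hc1 : (0 : ℝ) < c - 1 := by linarith
  have hw : (w : ℝ) / 2 = (v : ℝ) / 2 + (n : ℝ) := by
    have hwv : w = v + 2 * (n : ℤ) := by omega
    rw [hwv]; push_cast; ring
  rw [hw, Real.rpow_add hc0, Real.rpow_natCast]
  rw [div_mul_eq_mul_div, div_le_iff₀ hc1]
  have key : c ^ n - 1 ≤ (n : ℝ) * c ^ n * (c - 1) := pow_sub_one_le c hc.le n
  have hv0 : (0 : ℝ) < c ^ ((v : ℝ) / 2) := Real.rpow_pos_of_pos hc0 _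
  have hnk0 : (0 : ℝ) < c ^ ((nk : ℝ) / 2) := Real.rpow_pos_of_pos hc0 _
  have hexp : (v : ℝ) / 2 + (n : ℝ) + (nk : ℝ) / 2 ≤ (D : ℝ) := by
    have h' : (v : ℤ) + 2 * n + nk ≤ 2 * D := by omega
    have h'' : (v : ℝ) + 2 * (n : ℝ) + (nk : ℝ) ≤ 2 * (D : ℝ) := by exact_mod_cast h'
    linarith
  have hprod : c ^ ((v : ℝ) / 2) * c ^ n * c ^ ((nk : ℝ) / 2) ≤ c ^ ((D : ℝ)) := by
    rw [← Real.rpow_natCast c n, ← Real.rpow_add hc0, ← Real.rpow_add hc0]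
    exact Real.rpow_le_rpow_of_exponent_le hc.le hexp
  have hn_k : (n : ℝ) ≤ (k : ℝ) := by
    have : (n : ℤ) ≤ k := by omega
    exact_mod_cast this
  have hD0 : (0 : ℝ) < c ^ ((D : ℝ)) := Real.rpow_pos_of_pos hc0 _
  calc (c ^ ((v : ℝ) / 2) * c ^ n - c ^ ((v : ℝ) / 2)) * c ^ ((nk : ℝ) / 2)
      = (c ^ ((v : ℝ) / 2) * (c ^ n - 1)) * c ^ ((nk : ℝ) / 2) := by ring
    _ ≤ (c ^ ((v : ℝ) / 2) * ((n : ℝ) * c ^ n * (c - 1))) * c ^ ((nk : ℝ) / 2) :=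
        mul_le_mul_of_nonneg_right (mul_le_mul_of_nonneg_left key hv0.le) hnk0.le
    _ = ((n : ℝ) * (c - 1)) * (c ^ ((v : ℝ) / 2) * c ^ n * c ^ ((nk : ℝ) / 2)) := by ring
    _ ≤ ((n : ℝ) * (c - 1)) * c ^ ((D : ℝ)) := by
        apply mul_le_mul_of_nonneg_left hprod
        have : (0:ℝ) ≤ (n:ℝ) := Nat.cast_nonneg n
        positivity
    _ ≤ (k : ℝ) * c ^ ((D : ℝ)) * (c - 1) := by
        nlinarith [mul_nonneg (mul_nonneg (sub_nonneg.2 hn_k) hc1.le) hD0.le]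


/-- Bound on differences of `f^{(0)}_{N,k}` over ordered pairs, in units of the
minimal increment `λ^{(k−N)/2}`:
`(f⁰(ζ') − f⁰(ζ))·λ^{(N−k)/2} ≤ N·k·λ^{D_N(ζ')}`. -/
theorem fZero_difference_bound
    (N k : ℕ) (p : ℝ) (hN : 2 ≤ N) (hk : 1 ≤ k ∧ k < N)
    (hp : p ∈ Set.Ioo (1 / 2 : ℝ) 1)
    (a : ℕ → ℝ) (ha : IsBVP N k p a)
    (ξ ξ' : Conf N) (hξ : numParticles ξ = k) (hξ' : numParticles ξ' = k)
    (hle : heightLE ξ ξ') :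
    (fZero N p a ξ' - fZero N p a ξ) * lam p ^ (((N : ℝ) - k) / 2) ≤
      (N : ℝ) * k * lam p ^ DNh k ξ' := by
  obtain ⟨hk1, hkN⟩ := hk
  obtain ⟨hp1, hp2⟩ := hp
  have h1p : (0:ℝ) < 1 - p := by linarith
  have hlam : 1 < lam p := by
    rw [lam, lt_div_iff₀ h1p]; linarith
  have hlam0 : (0:ℝ) < lam p := by linarith
  -- L and R
  have hLmem : LNh ξ' ≤ N ∧ height ξ' (LNh ξ') = -(LNh ξ' : ℤ) := by
    have h : LNh ξ' ∈ {x | x ≤ N ∧ height ξ' x = -(x : ℤ)} :=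
      Nat.sSup_mem ⟨0, by simp [height_zero]⟩ ⟨N, fun x hx => hx.1⟩
    exact h
  have hRmem : RNh k ξ' ≤ N ∧
      height ξ' (RNh k ξ') = (RNh k ξ' : ℤ) - 2 * ((N : ℤ) - k) := by
    have h : RNh k ξ' ∈ {x | x ≤ N ∧ height ξ' x = (x : ℤ) - 2 * ((N : ℤ) - k)} :=
      Nat.sInf_mem ⟨N, le_refl N, by rw [height_top ξ' hξ']; ring⟩
    exact h
  set L := LNh ξ' with hLdef
  set R := RNh k ξ' with hRdef
  -- D bounds
  have hD1 : ((N : ℤ) - k) - L ≤ DNh k ξ' := by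
    have h1 := neg_abs_le ((L : ℤ) - ((N : ℤ) - k))
    have h2 : |(L : ℤ) - ((N : ℤ) - k)| ≤ DNh k ξ' := le_max_left _ _
    linarith
  have hD2 : (R : ℤ) - ((N : ℤ) - k) ≤ DNh k ξ' := by
    have h1 := le_abs_self ((R : ℤ) - ((N : ℤ) - k))
    have h2 : |(R : ℤ) - ((N : ℤ) - k)| ≤ DNh k ξ' := le_max_right _ _
    linarith
  -- rewrite the LHS as a sum
  have hsum : (fZero N p a ξ' - fZero N p a ξ) * lam p ^ (((N : ℝ) - k) / 2) =
      ∑ x ∈ Finset.Icc 1 (N - 1),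
        ((lam p ^ ((height ξ' x : ℝ) / 2) - lam p ^ ((height ξ x : ℝ) / 2)) / (lam p - 1))
          * lam p ^ (((N : ℝ) - k) / 2) := by
    rw [fZero, fZero, ← Finset.sum_sub_distrib, Finset.sum_mul]
    exact Finset.sum_congr rfl fun x _ => by ring
  rw [hsum]
  have hcast : (((N : ℤ) - (k : ℤ) : ℤ) : ℝ) = (N : ℝ) - k := by push_cast; ring
  have hbound : ∀ x ∈ Finset.Icc 1 (N - 1),
      ((lam p ^ ((height ξ' x : ℝ) / 2) - lam p ^ ((height ξ x : ℝ) / 2)) / (lam p - 1))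
          * lam p ^ (((N : ℝ) - k) / 2) ≤ (k : ℝ) * lam p ^ ((DNh k ξ' : ℝ)) := by
    intro x hx
    simp only [Finset.mem_Icc] at hx
    have hxN : x ≤ N := by omega
    have hvw : height ξ x ≤ height ξ' x := hle x hxN
    have hzero : height ξ x = height ξ' x →
        ((lam p ^ ((height ξ' x : ℝ) / 2) - lam p ^ ((height ξ x : ℝ) / 2)) / (lam p - 1))
          * lam p ^ (((N : ℝ) - k) / 2) ≤ (k : ℝ) * lam p ^ ((DNh k ξ' : ℝ)) := by
      intro heq
      rw [heq, sub_self, zero_div, zero_mul]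
      exact mul_nonneg (Nat.cast_nonneg k) (Real.rpow_nonneg hlam0.le _)
    by_cases hxL : x ≤ L
    · -- left flat region: heights agree
      apply hzero
      have h1 := height_lip ξ' x L hxL hLmem.1
      have h2 := height_lip ξ 0 x (Nat.zero_le x) hxN
      rw [hLmem.2, abs_le] at h1
      rw [height_zero, sub_zero, abs_le] at h2
      omega
    · by_cases hxR : R ≤ x
      · -- right flat region: heights agree
        apply hzero
        have h1 := height_lip ξ' R x hxR hxN
        have h2 := height_lip ξ x N hxN le_rfl
        rw [hRmem.2, abs_le] at h1
        rw [height_top ξ hξ, abs_le] at h2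
        omega
      · -- middle region
        push_neg at hxL hxR
        have h1 := height_lip ξ' L x hxL.le hxN
        have h2 := height_lip ξ' x R hxR.le hRmem.1
        have h3 := height_lip ξ' x N hxN le_rfl
        have h4 := height_lip ξ 0 x (Nat.zero_le x) hxN
        rw [hLmem.2, abs_le] at h1
        rw [hRmem.2, abs_le] at h2
        rw [height_top ξ' hξ', abs_le] at h3
        rw [height_zero, sub_zero, abs_le] at h4
        have hwD : height ξ' x + ((N : ℤ) - k) ≤ 2 * DNh k ξ' := by omega
        have h2k : height ξ' x - height ξ x ≤ 2 * (k : ℤ) := by omega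
        have := term_bound (lam p) hlam k (height ξ x) (height ξ' x)
          ((N : ℤ) - k) (DNh k ξ') hvw (height_sub_even ξ ξ' x) h2k hwD
        rw [hcast] at this
        exact this
  calc ∑ x ∈ Finset.Icc 1 (N - 1),
        ((lam p ^ ((height ξ' x : ℝ) / 2) - lam p ^ ((height ξ x : ℝ) / 2)) / (lam p - 1))
          * lam p ^ (((N : ℝ) - k) / 2)
      ≤ ∑ _x ∈ Finset.Icc 1 (N - 1), (k : ℝ) * lam p ^ ((DNh k ξ' : ℝ)) :=
        Finset.sum_le_sum hbound
    _ = ((N - 1 : ℕ) : ℝ) * ((k : ℝ) * lam p ^ ((DNh k ξ' : ℝ))) := by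
        rw [Finset.sum_const, Nat.card_Icc, nsmul_eq_mul]
        norm_num
    _ ≤ (N : ℝ) * ((k : ℝ) * lam p ^ ((DNh k ξ' : ℝ))) := by
        apply mul_le_mul_of_nonneg_right
        · exact_mod_cast Nat.cast_le.2 (Nat.sub_le N 1)
        · exact mul_nonneg (Nat.cast_nonneg k) (Real.rpow_nonneg hlam0.le _)
    _ = (N : ℝ) * k * lam p ^ DNh k ξ' := by
        rw [Real.rpow_intCast, mul_assoc]


end Wasep
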